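/- Let A be a finite-dimensional Hopf algebra over a field k with k-basis 𝔸. Equip B := A ⊗_k A with the right A-action (x ⊗ y) ·_φ a := Σ x a⁽¹⁾ ⊗ S(a⁽²⁾) y, and equip A ⊗_k A with the left A-module structure via the comultiplication, a · (x ⊗ y) := Σ a⁽¹⁾x ⊗ a⁽²⁾y. Then the elements Y_{abc} := Σ (a⁽¹⁾ ⊗ S(a⁽²⁾)b) ⊗_A (1 ⊗ c), for a, b, c ∈ 𝔸, form a k-basis of the balanced tensor product B ⊗_A (A ⊗_k A). -/

import Mathlib

open TensorProduct

variable (k A : Type*) [Field k] [Ring A] [HopfAlgebra k A]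

/-- The canonical `k`-linear identification `A ⊗[k] A ≃ A ⊗[k] Aᵐᵒᵖ`. -/
noncomputable def opE : A ⊗[k] A ≃ₗ[k] A ⊗[k] Aᵐᵒᵖ :=
  TensorProduct.congr (LinearEquiv.refl k A) (MulOpposite.opLinearEquiv k : A ≃ₗ[k] Aᵐᵒᵖ)

/-- The `k`-linear map `a ↦ Σ a⁽¹⁾ ⊗ S(a⁽²⁾)`. -/
noncomputable def gammaMap : A →ₗ[k] A ⊗[k] A :=
  (TensorProduct.map LinearMap.id (HopfAlgebra.antipode (R := k))) ∘ₗ Coalgebra.comul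

/-- The right `φ`-twisted action of `A` on `B = A ⊗[k] A`:
`(x ⊗ y) ·φ a = Σ x a⁽¹⁾ ⊗ S(a⁽²⁾) y`. -/
noncomputable def rphi (z : A ⊗[k] A) (a : A) : A ⊗[k] A :=
  (opE k A).symm (opE k A z * opE k A (gammaMap k A a))

/-- The submodule of relations defining the balanced tensor product
`B ⊗_A (A ⊗[k] A)`, where `B = A ⊗[k] A` carries the right `φ`-twisted `A`-action and
`A ⊗[k] A` carries the left `A`-action via comultiplication, `a · w = Δ(a)w`. -/
noncomputable def relY : Submodule k ((A ⊗[k] A) ⊗[k] (A ⊗[k] A)) :=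
  Submodule.span k {z | ∃ (x : A ⊗[k] A) (a : A) (w : A ⊗[k] A),
    z = (rphi k A x a) ⊗ₜ[k] w - x ⊗ₜ[k] ((Bialgebra.comulAlgHom k A a) * w)}

open Coalgebra HopfAlgebra LinearMap

/-- `b ↦ 1 ⊗ b`. -/
noncomputable def incl2 : A →ₗ[k] A ⊗[k] A := TensorProduct.mk k A A 1

/-- `a ⊗ b ↦ Δ(a) * (1 ⊗ b) = Σ a⁽¹⁾ ⊗ a⁽²⁾b`. -/
noncomputable def tauM : A ⊗[k] A →ₗ[k] A ⊗[k] A :=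
  (LinearMap.mul' k (A ⊗[k] A)) ∘ₗ TensorProduct.map Coalgebra.comul (incl2 k A)

/-- `a ⊗ b ↦ γ(a) * (1 ⊗ b) = Σ a⁽¹⁾ ⊗ S(a⁽²⁾)b`. -/
noncomputable def psiM : A ⊗[k] A →ₗ[k] A ⊗[k] A :=
  (LinearMap.mul' k (A ⊗[k] A)) ∘ₗ TensorProduct.map (gammaMap k A) (incl2 k A)

@[simp] lemma tauM_tmul (a b : A) :
    tauM k A (a ⊗ₜ[k] b) = comul a * ((1 : A) ⊗ₜ[k] b) := by
  simp [tauM, incl2]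

@[simp] lemma psiM_tmul (a b : A) :
    psiM k A (a ⊗ₜ[k] b) = gammaMap k A a * ((1 : A) ⊗ₜ[k] b) := by
  simp [psiM, incl2]

lemma gammaMap_repr (a : A) {ιr : Type*} (r : Coalgebra.Repr k a ιr) :
    gammaMap k A a = ∑ i ∈ r.index, r.left i ⊗ₜ[k] (antipode (R := k) (r.right i)) := by
  rw [gammaMap, LinearMap.comp_apply, ← r.eq, map_sum]
  simp

lemma psiM_repr (a b : A) {ιr : Type*} (r : Coalgebra.Repr k a ιr) :
    psiM k A (a ⊗ₜ[k] b)
      = ∑ i ∈ r.index, r.left i ⊗ₜ[k] (antipode (R := k) (r.right i) * b) := by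
  rw [psiM_tmul, gammaMap_repr k A a r, Finset.sum_mul]
  simp [Algebra.TensorProduct.tmul_mul_tmul]

lemma opE_tmul (x y : A) : opE k A (x ⊗ₜ[k] y) = x ⊗ₜ[k] MulOpposite.op y := by
  simp [opE]

lemma opE_symm_tmul (x : A) (y : Aᵐᵒᵖ) :
    (opE k A).symm (x ⊗ₜ[k] y) = x ⊗ₜ[k] y.unop := by
  simp [opE]

lemma rphi_repr (x₁ x₂ a : A) {ιr : Type*} (r : Coalgebra.Repr k a ιr) :
    rphi k A (x₁ ⊗ₜ[k] x₂) a
      = ∑ i ∈ r.index, (x₁ * r.left i) ⊗ₜ[k] (antipode (R := k) (r.right i) * x₂) := by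
  rw [rphi, gammaMap_repr k A a r, map_sum, Finset.mul_sum, map_sum]
  apply Finset.sum_congr rfl
  intro i _
  simp [opE, Algebra.TensorProduct.tmul_mul_tmul, ← MulOpposite.op_mul]

lemma psiM_eq_rphi (a b : A) : rphi k A ((1 : A) ⊗ₜ[k] b) a = psiM k A (a ⊗ₜ[k] b) := by
  rw [rphi_repr k A 1 b a (ℛ k a), psiM_repr k A a b (ℛ k a)]
  simp

lemma counit_smul_sum (a : A) {ιr : Type*} (r : Coalgebra.Repr k a ιr) :
    ∑ i ∈ r.index, counit (R := k) (r.right i) • r.left i = a := by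
  have h := Coalgebra.sum_tmul_counit_eq (R := k) r
  apply_fun (TensorProduct.rid k A) at h
  simp only [map_sum, TensorProduct.rid_tmul, one_smul] at h
  exact h

lemma key_sum (a : A) {ιr : Type*} (r : Coalgebra.Repr k a ιr) :
    ∑ i ∈ r.index, comul (R := k) (r.left i) * ((1 : A) ⊗ₜ[k] antipode (R := k) (r.right i))
      = a ⊗ₜ[k] (1 : A) := by
  have hco := Coalgebra.sum_tmul_tmul_eq (R := k) r
    (fun i => ℛ k (r.left i)) (fun i => ℛ k (r.right i))
  apply_fun (LinearMap.lTensor A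
    ((LinearMap.mul' k A) ∘ₗ (LinearMap.lTensor A (antipode (R := k))))) at hco
  simp only [map_sum, lTensor_tmul, LinearMap.comp_apply, LinearMap.mul'_apply] at hco
  calc ∑ i ∈ r.index, comul (R := k) (r.left i) * ((1 : A) ⊗ₜ[k] antipode (R := k) (r.right i))
      = ∑ i ∈ r.index, ∑ j ∈ (ℛ k (r.left i)).index,
          (ℛ k (r.left i)).left j ⊗ₜ[k]
            ((ℛ k (r.left i)).right j * antipode (R := k) (r.right i)) := by
        refine Finset.sum_congr rfl fun i _ => ?_
        rw [← (ℛ k (r.left i)).eq, Finset.sum_mul]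
        simp [Algebra.TensorProduct.tmul_mul_tmul]
    _ = ∑ i ∈ r.index, r.left i ⊗ₜ[k]
          (∑ j ∈ (ℛ k (r.right i)).index,
            (ℛ k (r.right i)).left j * antipode (R := k) ((ℛ k (r.right i)).right j)) := by
        rw [hco]
        exact Finset.sum_congr rfl fun i _ => (tmul_sum _ _ _).symm
    _ = a ⊗ₜ[k] (1 : A) := by
        have : ∀ i ∈ r.index, r.left i ⊗ₜ[k]
            (∑ j ∈ (ℛ k (r.right i)).index,
              (ℛ k (r.right i)).left j * antipode (R := k) ((ℛ k (r.right i)).right j))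
            = counit (R := k) (r.right i) • r.left i ⊗ₜ[k] (1 : A) := by
          intro i _
          rw [HopfAlgebra.sum_mul_antipode_eq_algebraMap_counit (ℛ k (r.right i)),
            Algebra.algebraMap_eq_smul_one, tmul_smul]
        rw [Finset.sum_congr rfl this]
        simp only [smul_tmul']
        rw [← sum_tmul, counit_smul_sum]

lemma tauM_psiM (a b : A) : tauM k A (psiM k A (a ⊗ₜ[k] b)) = a ⊗ₜ[k] b := by
  rw [psiM_repr k A a b (ℛ k a), map_sum]
  have : ∀ i ∈ (ℛ k a).index, tauM k A ((ℛ k a).left i ⊗ₜ[k] (antipode (R := k) ((ℛ k a).right i) * b))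
      = (comul (R := k) ((ℛ k a).left i) * ((1 : A) ⊗ₜ[k] antipode (R := k) ((ℛ k a).right i)))
        * ((1 : A) ⊗ₜ[k] b) := by
    intro i _
    rw [tauM_tmul, mul_assoc]
    congr 1
    rw [Algebra.TensorProduct.tmul_mul_tmul, one_mul]
  rw [Finset.sum_congr rfl this, ← Finset.sum_mul, key_sum k A a (ℛ k a),
    Algebra.TensorProduct.tmul_mul_tmul, one_mul, mul_one]

lemma tauM_comp_psiM : tauM k A ∘ₗ psiM k A = LinearMap.id := by
  apply TensorProduct.ext'
  intro a b
  simpa using tauM_psiM k A a b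

lemma tauM_bijective [FiniteDimensional k A] : Function.Bijective (tauM k A) := by
  have hsurj : Function.Surjective (tauM k A) := by
    intro z
    exact ⟨psiM k A z, congr($(tauM_comp_psiM k A) z)⟩
  exact ⟨LinearMap.injective_iff_surjective.2 hsurj, hsurj⟩

lemma psiM_tauM [FiniteDimensional k A] (z : A ⊗[k] A) : psiM k A (tauM k A z) = z := by
  apply (tauM_bijective k A).1
  exact congr($(tauM_comp_psiM k A) (tauM k A z))

/-- `a ⊗ w ↦ Δ(a) * w`. -/
noncomputable def actL : A ⊗[k] (A ⊗[k] A) →ₗ[k] A ⊗[k] A :=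
  (LinearMap.mul' k (A ⊗[k] A)) ∘ₗ (LinearMap.rTensor (A ⊗[k] A) Coalgebra.comul)

@[simp] lemma actL_tmul (a : A) (w : A ⊗[k] A) :
    actL k A (a ⊗ₜ[k] w) = comul a * w := by
  simp [actL]

/-- `(x ⊗ y) ⊗ w ↦ (x ⊗ w) ⊗ y`. -/
noncomputable def shuf : (A ⊗[k] A) ⊗[k] (A ⊗[k] A) →ₗ[k] (A ⊗[k] (A ⊗[k] A)) ⊗[k] A :=
  (TensorProduct.assoc k A (A ⊗[k] A) A).symm.toLinearMap
    ∘ₗ (LinearMap.lTensor A (TensorProduct.comm k A (A ⊗[k] A)).toLinearMap)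
    ∘ₗ (TensorProduct.assoc k A A (A ⊗[k] A)).toLinearMap

@[simp] lemma shuf_tmul (x y : A) (w : A ⊗[k] A) :
    shuf k A ((x ⊗ₜ[k] y) ⊗ₜ[k] w) = (x ⊗ₜ[k] w) ⊗ₜ[k] y := by
  simp [shuf]

noncomputable def Gsig : (A ⊗[k] A) ⊗[k] (A ⊗[k] A) →ₗ[k] (A ⊗[k] A) ⊗[k] A :=
  (LinearMap.rTensor A (actL k A)) ∘ₗ shuf k A

@[simp] lemma Gsig_tmul (x y : A) (w : A ⊗[k] A) :
    Gsig k A ((x ⊗ₜ[k] y) ⊗ₜ[k] w) = (comul x * w) ⊗ₜ[k] y := by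
  simp [Gsig]

noncomputable def Gmap : (A ⊗[k] A) ⊗[k] (A ⊗[k] A) →ₗ[k] (A ⊗[k] A) ⊗[k] A :=
  Gsig k A ∘ₗ (LinearMap.rTensor (A ⊗[k] A) (tauM k A))

lemma Gsig_mul_right (P : A ⊗[k] A) (a : A) (w : A ⊗[k] A) :
    Gsig k A ((P * (a ⊗ₜ[k] (1 : A))) ⊗ₜ[k] w) = Gsig k A (P ⊗ₜ[k] (comul a * w)) := by
  induction P using TensorProduct.induction_on with
  | zero => simp
  | tmul p q =>
      rw [Algebra.TensorProduct.tmul_mul_tmul, mul_one, Gsig_tmul, Gsig_tmul,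
        Bialgebra.comul_mul, mul_assoc]
  | add P₁ P₂ h₁ h₂ =>
      rw [add_mul, add_tmul, map_add, h₁, h₂, ← map_add, ← add_tmul]

lemma rphi_zero (a : A) : rphi k A 0 a = 0 := by simp [rphi]

lemma rphi_add (x y : A ⊗[k] A) (a : A) :
    rphi k A (x + y) a = rphi k A x a + rphi k A y a := by
  simp [rphi, add_mul]

lemma Gmap_rel (x : A ⊗[k] A) (a : A) (w : A ⊗[k] A) :
    Gmap k A ((rphi k A x a) ⊗ₜ[k] w) = Gmap k A (x ⊗ₜ[k] (comul a * w)) := by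
  induction x using TensorProduct.induction_on with
  | zero => rw [rphi_zero]; simp
  | add x y hx hy =>
      rw [rphi_add, add_tmul, map_add, hx, hy, ← map_add, ← add_tmul]
  | tmul x₁ x₂ =>
      set r := ℛ k a with hr
      rw [rphi_repr k A x₁ x₂ a r, Gmap, LinearMap.comp_apply, LinearMap.comp_apply,
        LinearMap.rTensor_tmul, LinearMap.rTensor_tmul]
      have h1 : tauM k A (∑ i ∈ r.index,
            (x₁ * r.left i) ⊗ₜ[k] (antipode (R := k) (r.right i) * x₂))
          = tauM k A (x₁ ⊗ₜ[k] x₂) * (a ⊗ₜ[k] (1 : A)) := by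
        rw [map_sum]
        have h2 : ∀ i ∈ r.index,
            tauM k A ((x₁ * r.left i) ⊗ₜ[k] (antipode (R := k) (r.right i) * x₂))
            = comul (R := k) x₁ * ((comul (R := k) (r.left i)
                * ((1 : A) ⊗ₜ[k] antipode (R := k) (r.right i))) * ((1 : A) ⊗ₜ[k] x₂)) := by
          intro i _
          rw [tauM_tmul, Bialgebra.comul_mul,
            show ((1 : A) ⊗ₜ[k] (antipode (R := k) (r.right i) * x₂))
              = ((1 : A) ⊗ₜ[k] antipode (R := k) (r.right i)) * ((1 : A) ⊗ₜ[k] x₂) from by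
                rw [Algebra.TensorProduct.tmul_mul_tmul, one_mul]]
          simp only [mul_assoc]
        rw [Finset.sum_congr rfl h2, ← Finset.mul_sum, ← Finset.sum_mul, key_sum k A a r,
          tauM_tmul, Algebra.TensorProduct.tmul_mul_tmul, mul_one, one_mul, mul_assoc,
          Algebra.TensorProduct.tmul_mul_tmul, one_mul, mul_one]
      rw [h1, Gsig_mul_right]

lemma relY_le_ker : relY k A ≤ LinearMap.ker (Gmap k A) := by
  rw [relY, Submodule.span_le]
  rintro z ⟨x, a, w, rfl⟩
  simp only [SetLike.mem_coe, LinearMap.mem_ker, map_sub]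
  rw [Bialgebra.comulAlgHom_apply, Gmap_rel]
  exact sub_self _

lemma Gmap_Y [FiniteDimensional k A] (a b c : A) :
    Gmap k A ((psiM k A (a ⊗ₜ[k] b)) ⊗ₜ[k] ((1 : A) ⊗ₜ[k] c))
      = (tauM k A (a ⊗ₜ[k] c)) ⊗ₜ[k] b := by
  rw [Gmap, LinearMap.comp_apply, LinearMap.rTensor_tmul, tauM_psiM]
  simp

/-- `a ⊗ (b ⊗ c) ↦ ψ(a ⊗ b) ⊗ (1 ⊗ c)`. -/
noncomputable def PhiZ : A ⊗[k] (A ⊗[k] A) →ₗ[k] (A ⊗[k] A) ⊗[k] (A ⊗[k] A) :=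
  (TensorProduct.map (psiM k A) (incl2 k A)) ∘ₗ (TensorProduct.assoc k A A A).symm.toLinearMap

@[simp] lemma PhiZ_tmul (a b c : A) :
    PhiZ k A (a ⊗ₜ[k] (b ⊗ₜ[k] c)) = psiM k A (a ⊗ₜ[k] b) ⊗ₜ[k] ((1 : A) ⊗ₜ[k] c) := by
  simp [PhiZ, incl2]

/-- The map `A ⊗ (A ⊗ A) → B ⊗_A (A ⊗ A)` hitting the putative basis. -/
noncomputable def PhiQ : A ⊗[k] (A ⊗[k] A) →ₗ[k] ((A ⊗[k] A) ⊗[k] (A ⊗[k] A)) ⧸ relY k A :=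
  (relY k A).mkQ ∘ₗ PhiZ k A

lemma mem_relY (x : A ⊗[k] A) (a : A) (w : A ⊗[k] A) :
    (rphi k A x a) ⊗ₜ[k] w - x ⊗ₜ[k] (comul (R := k) a * w) ∈ relY k A := by
  apply Submodule.subset_span
  exact ⟨x, a, w, by rw [Bialgebra.comulAlgHom_apply]⟩

lemma mk_rel (x : A ⊗[k] A) (a : A) (w : A ⊗[k] A) :
    (Submodule.Quotient.mk ((rphi k A x a) ⊗ₜ[k] w)
      : ((A ⊗[k] A) ⊗[k] (A ⊗[k] A)) ⧸ relY k A)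
      = Submodule.Quotient.mk (x ⊗ₜ[k] (comul (R := k) a * w)) :=
  (Submodule.Quotient.eq _).2 (mem_relY k A x a w)

lemma mk_one_tmul_mem [FiniteDimensional k A] (b : A) (w : A ⊗[k] A) :
    (Submodule.Quotient.mk ((((1 : A) ⊗ₜ[k] b) ⊗ₜ[k] w))
      : ((A ⊗[k] A) ⊗[k] (A ⊗[k] A)) ⧸ relY k A) ∈ LinearMap.range (PhiQ k A) := by
  obtain ⟨P, rfl⟩ : ∃ P, tauM k A P = w := (tauM_bijective k A).2 w
  induction P using TensorProduct.induction_on with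
  | zero => simp only [map_zero, tmul_zero, Submodule.Quotient.mk_zero]; exact zero_mem _
  | add P₁ P₂ h₁ h₂ =>
      rw [map_add, tmul_add, Submodule.Quotient.mk_add]
      exact add_mem h₁ h₂
  | tmul a c =>
      rw [tauM_tmul, ← mk_rel, psiM_eq_rphi]
      exact ⟨a ⊗ₜ[k] (b ⊗ₜ[k] c), by rw [PhiQ, LinearMap.comp_apply, PhiZ_tmul]; rfl⟩

lemma mk_psiM_mem [FiniteDimensional k A] (Q w : A ⊗[k] A) :
    (Submodule.Quotient.mk ((psiM k A Q) ⊗ₜ[k] w)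
      : ((A ⊗[k] A) ⊗[k] (A ⊗[k] A)) ⧸ relY k A) ∈ LinearMap.range (PhiQ k A) := by
  induction Q using TensorProduct.induction_on with
  | zero => simp only [map_zero, zero_tmul, Submodule.Quotient.mk_zero]; exact zero_mem _
  | add Q₁ Q₂ h₁ h₂ =>
      rw [map_add, add_tmul, Submodule.Quotient.mk_add]
      exact add_mem h₁ h₂
  | tmul a b =>
      rw [← psiM_eq_rphi, mk_rel]
      exact mk_one_tmul_mem k A b _

lemma PhiQ_surjective [FiniteDimensional k A] : Function.Surjective (PhiQ k A) := by
  intro q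
  obtain ⟨z, rfl⟩ := Submodule.Quotient.mk_surjective _ q
  suffices h : (Submodule.Quotient.mk z :
      ((A ⊗[k] A) ⊗[k] (A ⊗[k] A)) ⧸ relY k A) ∈ LinearMap.range (PhiQ k A) from h
  induction z using TensorProduct.induction_on with
  | zero => simp only [Submodule.Quotient.mk_zero]; exact zero_mem _
  | add z₁ z₂ h₁ h₂ =>
      rw [Submodule.Quotient.mk_add]
      exact add_mem h₁ h₂
  | tmul P w =>
      rw [show P = psiM k A (tauM k A P) from (psiM_tauM k A P).symm]
      exact mk_psiM_mem k A _ _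

/-- For a finite-dimensional Hopf algebra `A` over a field `k` with `k`-basis
`𝔸`, the elements `Y_{abc} = Σ (a⁽¹⁾ ⊗ S(a⁽²⁾)b) ⊗_A (1 ⊗ c)`, for `a, b, c ∈ 𝔸`, form a
`k`-basis of the balanced tensor product `B ⊗_A (A ⊗[k] A)`. -/
theorem Y_basis_of_balanced_tensor
    [FiniteDimensional k A] {ι : Type*} (𝔸 : Module.Basis ι k A) :
    ∃ bq : Module.Basis (ι × ι × ι) k (((A ⊗[k] A) ⊗[k] (A ⊗[k] A)) ⧸ relY k A),
      ∀ t : ι × ι × ι,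
        bq t = Submodule.Quotient.mk
          ((rphi k A ((1 : A) ⊗ₜ[k] 𝔸 t.2.1) (𝔸 t.1)) ⊗ₜ[k] ((1 : A) ⊗ₜ[k] 𝔸 t.2.2)) := by
  set v : ι × ι × ι → ((A ⊗[k] A) ⊗[k] (A ⊗[k] A)) ⧸ relY k A := fun t =>
    Submodule.Quotient.mk
      ((rphi k A ((1 : A) ⊗ₜ[k] 𝔸 t.2.1) (𝔸 t.1)) ⊗ₜ[k] ((1 : A) ⊗ₜ[k] 𝔸 t.2.2)) with hv
  -- spanning
  have hb3 : LinearMap.range (PhiQ k A) ≤ Submodule.span k (Set.range v) := by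
    rw [LinearMap.range_eq_map, ← (𝔸.tensorProduct (𝔸.tensorProduct 𝔸)).span_eq,
      Submodule.map_span, ← Set.range_comp]
    apply Submodule.span_mono
    rintro _ ⟨p, rfl⟩
    refine ⟨(p.1, p.2.1, p.2.2), ?_⟩
    simp only [hv, Function.comp_apply, Module.Basis.tensorProduct_apply', PhiQ,
      LinearMap.comp_apply, PhiZ_tmul, psiM_eq_rphi, Submodule.mkQ_apply]
  have hspan : ⊤ ≤ Submodule.span k (Set.range v) := by
    intro q _
    exact hb3 (PhiQ_surjective k A q)
  -- linear independence
  set Gbar : (((A ⊗[k] A) ⊗[k] (A ⊗[k] A)) ⧸ relY k A) →ₗ[k] (A ⊗[k] A) ⊗[k] A :=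
    Submodule.liftQ (relY k A) (Gmap k A) (relY_le_ker k A) with hGbar
  set Teq : (A ⊗[k] A) ⊗[k] A ≃ₗ[k] (A ⊗[k] A) ⊗[k] A :=
    TensorProduct.congr (LinearEquiv.ofBijective (tauM k A) (tauM_bijective k A))
      (LinearEquiv.refl k A) with hTeq
  set B3 : Module.Basis ((ι × ι) × ι) k ((A ⊗[k] A) ⊗[k] A) :=
    (𝔸.tensorProduct 𝔸).tensorProduct 𝔸 with hB3
  have hGv : ∀ t, Gbar (v t) = Teq (B3 ((t.1, t.2.2), t.2.1)) := by
    intro t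
    rw [hv, hGbar, Submodule.liftQ_apply, psiM_eq_rphi, Gmap_Y, hB3, hTeq,
      Module.Basis.tensorProduct_apply, Module.Basis.tensorProduct_apply, TensorProduct.congr_tmul]
    rfl
  have hinj : Function.Injective (fun t : ι × ι × ι => ((t.1, t.2.2), t.2.1)) := by
    rintro ⟨a, b, c⟩ ⟨a', b', c'⟩ h
    simp only [Prod.mk.injEq] at h
    obtain ⟨⟨h1, h2⟩, h3⟩ := h
    simp [h1, h2, h3]
  have hli : LinearIndependent k v := by
    apply LinearIndependent.of_comp Gbar
    have heq : (Gbar ∘ v) = fun t => Teq (B3 ((t.1, t.2.2), t.2.1)) := funext fun t => hGv t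
    rw [heq]
    have h1 : LinearIndependent k fun t : ι × ι × ι => B3 ((t.1, t.2.2), t.2.1) :=
      B3.linearIndependent.comp _ hinj
    exact h1.map' Teq.toLinearMap Teq.ker
  exact ⟨Module.Basis.mk hli hspan, fun t => by rw [Module.Basis.mk_apply]⟩
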